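/- For every $r$ with $0 < r \leq \frac{\log 3}{2}$, one has $\min\big( 2 F(r),\ C(r) \big) \leq \sqrt{2}$, where $F(r) = \frac{e^{\pi\sqrt 3}\, C\big(\frac{\log 3}{2}\big)\, e^{-\pi/\sinh(r)}}{3\sinh^2(r)}$ and $C(r) = \left(\frac{4\pi}{3}\left(1 - \operatorname{sech}^6(r/2)\right)\right)^{-1/2}$. -/

import Mathlib

open Real

/-- Teo's function `C(r) = ((4π/3)(1 - sech⁶(r/2)))^{-1/2}`. -/
noncomputable def TeoC (r : ℝ) : ℝ :=
  (Real.sqrt (4 * π / 3 * (1 - (1 / Real.cosh (r / 2)) ^ 6)))⁻¹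

/-- The collar bound from Part (3) of Proposition 3.3. -/
noncomputable def F (r : ℝ) : ℝ :=
  Real.exp (π * Real.sqrt 3) * TeoC (Real.log 3 / 2) * Real.exp (-π / Real.sinh r)
    / (3 * Real.sinh r ^ 2)

lemma exp_le_pow256 {x : ℝ} (hx : 0 ≤ x) (hx1 : x < 256) :
    Real.exp x ≤ ((1 - x / 256)⁻¹) ^ 256 := by
  have h0 : (0:ℝ) < 1 - x / 256 := by
    have : x / 256 < 1 := (div_lt_one (by norm_num)).2 hx1
    linarith
  have h1 : 1 - x / 256 ≤ (Real.exp (x / 256))⁻¹ := by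
    rw [← Real.exp_neg]
    have := Real.add_one_le_exp (-(x / 256))
    linarith
  have h2 : Real.exp (x / 256) ≤ (1 - x / 256)⁻¹ := by
    rw [← inv_inv (Real.exp (x / 256))]
    exact inv_anti₀ h0 h1
  calc Real.exp x = Real.exp ((256 : ℕ) * (x / 256)) := by push_cast; ring_nf
    _ = Real.exp (x / 256) ^ 256 := Real.exp_nat_mul _ 256
    _ ≤ ((1 - x / 256)⁻¹) ^ 256 := pow_le_pow_left₀ (Real.exp_pos _).le h2 256

lemma pow256_le_exp {x : ℝ} (hx : -256 ≤ x) :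
    ((1 + x / 256) ^ 256 : ℝ) ≤ Real.exp x := by
  have h0 : (0:ℝ) ≤ 1 + x / 256 := by linarith
  have h2 : 1 + x / 256 ≤ Real.exp (x / 256) := by
    have := Real.add_one_le_exp (x / 256); linarith
  calc ((1 + x / 256) ^ 256 : ℝ) ≤ Real.exp (x / 256) ^ 256 := pow_le_pow_left₀ h0 h2 256
    _ = Real.exp ((256 : ℕ) * (x / 256)) := (Real.exp_nat_mul _ 256).symm
    _ = Real.exp x := by push_cast; ring_nf

lemma cosh_ge {x : ℝ} (hx : 0 ≤ x) : 1 + x ^ 2 / 2 ≤ Real.cosh x := by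
  have h2 : Real.cosh (2 * (x / 2)) = Real.cosh (x / 2) ^ 2 + Real.sinh (x / 2) ^ 2 :=
    Real.cosh_two_mul _
  have h3 : Real.cosh (x / 2) ^ 2 = Real.sinh (x / 2) ^ 2 + 1 := Real.cosh_sq _
  have h4 : (2 : ℝ) * (x / 2) = x := by ring
  rw [h4] at h2
  have h5 : x / 2 ≤ Real.sinh (x / 2) := Real.self_le_sinh_iff.2 (by linarith)
  have h6 : (x / 2) ^ 2 ≤ Real.sinh (x / 2) ^ 2 :=
    pow_le_pow_left₀ (by linarith) h5 2
  nlinarith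

lemma g_mono {s b : ℝ} (hs : 0 < s) (hsb : s ≤ b) (hb : 2 * b ≤ π) :
    Real.exp (-(π / s)) / s ^ 2 ≤ Real.exp (-(π / b)) / b ^ 2 := by
  have hb0 : 0 < b := lt_of_lt_of_le hs hsb
  set d := π / s - π / b with hd
  clear_value d
  have hd0 : 0 ≤ d := by
    have h1 : π / b ≤ π / s := by
      apply div_le_div_of_nonneg_left Real.pi_pos.le hs hsb
    simp only [hd]; linarith
  have hkey : b ^ 2 ≤ Real.exp d * s ^ 2 := by
    have hbs : b / s = 1 + d * (b / π) := by
      field_simp [hd]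
      rw [hd]; field_simp; ring
    have h1 : b / s ≤ 1 + d / 2 := by
      rw [hbs]
      have h2 : d * (b / π) ≤ d * (1 / 2) := by
        apply mul_le_mul_of_nonneg_left ?_ hd0
        rw [div_le_div_iff₀ Real.pi_pos (by norm_num : (0:ℝ) < 2)]
        linarith
      linarith
    have h2 : (1 + d / 2) ^ 2 ≤ Real.exp d := by
      have h3 : 1 + d / 2 ≤ Real.exp (d / 2) := by
        have := Real.add_one_le_exp (d / 2); linarith
      calc (1 + d / 2) ^ 2 ≤ Real.exp (d / 2) ^ 2 := pow_le_pow_left₀ (by linarith) h3 2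
        _ = Real.exp ((2 : ℕ) * (d / 2)) := (Real.exp_nat_mul _ 2).symm
        _ = Real.exp d := by push_cast; ring_nf
    have h3 : (b / s) ^ 2 ≤ Real.exp d :=
      le_trans (pow_le_pow_left₀ (by positivity) h1 2) h2
    have h4 := mul_le_mul_of_nonneg_right h3 (sq_nonneg s)
    calc b ^ 2 = (b / s) ^ 2 * s ^ 2 := by field_simp
      _ ≤ Real.exp d * s ^ 2 := h4
  rw [div_le_div_iff₀ (by positivity) (by positivity)]
  have hsplit : Real.exp (-(π / s)) = Real.exp (-(π / b)) * Real.exp (-d) := by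
    rw [← Real.exp_add]; congr 1; simp only [hd]; ring
  rw [hsplit]
  have hexp : Real.exp (-d) * b ^ 2 ≤ s ^ 2 := by
    have h4 := mul_le_mul_of_nonneg_left hkey (Real.exp_pos (-d)).le
    calc Real.exp (-d) * b ^ 2 ≤ Real.exp (-d) * (Real.exp d * s ^ 2) := h4
      _ = s ^ 2 := by rw [← mul_assoc, ← Real.exp_add]; simp
  calc Real.exp (-(π / b)) * Real.exp (-d) * b ^ 2
      = Real.exp (-(π / b)) * (Real.exp (-d) * b ^ 2) := by ring
    _ ≤ Real.exp (-(π / b)) * s ^ 2 :=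
        mul_le_mul_of_nonneg_left hexp (Real.exp_pos _).le

lemma teoC_le {r c q : ℝ} (hc : 1 ≤ c) (hcosh : c ≤ Real.cosh (r / 2)) (hq : 0 < q)
    (hX : (q⁻¹) ^ 2 ≤ 4 * π / 3 * (1 - (1 / c) ^ 6)) : TeoC r ≤ q := by
  have hc0 : 0 < c := by linarith
  have hcosh0 : 0 < Real.cosh (r / 2) := Real.cosh_pos _
  have h6 : (1 / Real.cosh (r / 2)) ^ 6 ≤ (1 / c) ^ 6 :=
    pow_le_pow_left₀ (by positivity) (one_div_le_one_div_of_le hc0 hcosh) 6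
  have hXr : (q⁻¹) ^ 2 ≤ 4 * π / 3 * (1 - (1 / Real.cosh (r / 2)) ^ 6) := by
    refine hX.trans ?_
    have hpi : (0:ℝ) ≤ 4 * π / 3 := by positivity
    nlinarith
  have hs : q⁻¹ ≤ Real.sqrt (4 * π / 3 * (1 - (1 / Real.cosh (r / 2)) ^ 6)) := by
    have h := Real.sqrt_le_sqrt hXr
    rwa [Real.sqrt_sq (by positivity)] at h
  have h := inv_anti₀ (inv_pos.2 hq) hs
  rw [inv_inv] at h
  exact h

/-- On `(0, (log 3)/2]`, `min(2F(r), C(r)) ≤ √2`. -/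
theorem min_two_F_C_le :
    ∀ r : ℝ, 0 < r → r ≤ Real.log 3 / 2 →
      min (2 * F r) (TeoC r) ≤ Real.sqrt 2 := by
  intro r hr hr2
  have hpi_lo : 3.141592 < π := Real.pi_gt_d6
  have hpi_hi : π < 3.141593 := Real.pi_lt_d6
  rcases le_total r 0.45 with h | h
  · -- small r : use 2 F r
    refine le_trans (min_le_left _ _) ?_
    have h141 : (1.41 : ℝ) ≤ Real.sqrt 2 := by
      nlinarith [Real.sq_sqrt (show (0:ℝ) ≤ 2 by norm_num), Real.sqrt_nonneg 2]
    refine le_trans ?_ h141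
    have hs0 : 0 < Real.sinh r := Real.sinh_pos_iff.2 hr
    -- sinh r ≤ 0.473
    have hsinh : Real.sinh r ≤ 0.473 := by
      have h1 : Real.sinh r ≤ Real.sinh 0.45 := Real.sinh_le_sinh.2 h
      have h2 : Real.sinh (0.45 : ℝ) ≤ 0.473 := by
        rw [Real.sinh_eq]
        have hu : Real.exp (0.45 : ℝ) ≤ ((1 - (0.45 : ℝ) / 256)⁻¹) ^ 256 :=
          exp_le_pow256 (by norm_num) (by norm_num)
        have hl : ((1 + (-0.45 : ℝ) / 256) ^ 256 : ℝ) ≤ Real.exp (-0.45 : ℝ) :=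
          pow256_le_exp (by norm_num)
        have hnum : ((1 - (0.45 : ℝ) / 256)⁻¹) ^ 256 - (1 + (-0.45 : ℝ) / 256) ^ 256
            ≤ 2 * 0.473 := by norm_num
        linarith
      linarith
    -- exp (π √3) ≤ 245
    have hsqrt3 : Real.sqrt 3 ≤ 1.7320509 := by
      nlinarith [Real.sq_sqrt (show (0:ℝ) ≤ 3 by norm_num), Real.sqrt_nonneg 3]
    have hargA : π * Real.sqrt 3 ≤ 5.4414 := by
      nlinarith [Real.sqrt_nonneg 3, Real.pi_pos]
    have hA : Real.exp (π * Real.sqrt 3) ≤ 245 := by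
      calc Real.exp (π * Real.sqrt 3) ≤ Real.exp 5.4414 := Real.exp_le_exp.2 hargA
        _ ≤ ((1 - (5.4414 : ℝ) / 256)⁻¹) ^ 256 := exp_le_pow256 (by norm_num) (by norm_num)
        _ ≤ 245 := by norm_num
    -- log 3 ≥ 1.09
    have hlog : (1.09 : ℝ) ≤ Real.log 3 := by
      rw [Real.le_log_iff_exp_le (by norm_num)]
      calc Real.exp (1.09 : ℝ) ≤ ((1 - (1.09 : ℝ) / 256)⁻¹) ^ 256 :=
            exp_le_pow256 (by norm_num) (by norm_num)
        _ ≤ 3 := by norm_num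
    -- TeoC (log 3 / 2) ≤ 1.103
    have hT : TeoC (Real.log 3 / 2) ≤ 1.103 := by
      apply teoC_le (c := 1.037128125) (by norm_num) ?_ (by norm_num) ?_
      · have hx : (0:ℝ) ≤ Real.log 3 / 2 / 2 := by linarith
        have hco := cosh_ge hx
        have hxx : (0.2725 : ℝ) ≤ Real.log 3 / 2 / 2 := by linarith
        nlinarith
      · calc ((1.103 : ℝ)⁻¹) ^ 2
            ≤ 4 * 3.141592 / 3 * (1 - (1 / (1.037128125 : ℝ)) ^ 6) := by norm_num
          _ ≤ 4 * π / 3 * (1 - (1 / (1.037128125 : ℝ)) ^ 6) := by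
              apply mul_le_mul_of_nonneg_right ?_ (by norm_num)
              linarith
    have hTnn : 0 ≤ TeoC (Real.log 3 / 2) := by
      unfold TeoC; positivity
    -- exponential part
    have hE : Real.exp (-(π / Real.sinh r)) / Real.sinh r ^ 2
        ≤ ((703 : ℝ)⁻¹) / (0.473 : ℝ) ^ 2 := by
      have hstep : Real.exp (-(π / (0.473 : ℝ))) ≤ (703 : ℝ)⁻¹ := by
        rw [Real.exp_neg]
        apply inv_anti₀ (by norm_num)
        have h1 : (6.6418 : ℝ) ≤ π / 0.473 := by
          rw [le_div_iff₀ (by norm_num)]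
          linarith
        calc (703 : ℝ) ≤ (1 + (6.6418 : ℝ) / 256) ^ 256 := by norm_num
          _ ≤ Real.exp (6.6418 : ℝ) := pow256_le_exp (by norm_num)
          _ ≤ Real.exp (π / 0.473) := Real.exp_le_exp.2 h1
      calc Real.exp (-(π / Real.sinh r)) / Real.sinh r ^ 2
          ≤ Real.exp (-(π / (0.473 : ℝ))) / (0.473 : ℝ) ^ 2 :=
            g_mono hs0 hsinh (by linarith)
        _ ≤ ((703 : ℝ)⁻¹) / (0.473 : ℝ) ^ 2 := by gcongr
    -- assemble
    have hEnn : 0 ≤ Real.exp (-(π / Real.sinh r)) / Real.sinh r ^ 2 := by positivity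
    have hFeq : F r = Real.exp (π * Real.sqrt 3) * TeoC (Real.log 3 / 2) *
        (Real.exp (-(π / Real.sinh r)) / Real.sinh r ^ 2) / 3 := by
      unfold F
      rw [show -π / Real.sinh r = -(π / Real.sinh r) from neg_div _ _]
      ring
    have hFle : F r ≤ 245 * 1.103 * (((703 : ℝ)⁻¹) / (0.473 : ℝ) ^ 2) / 3 := by
      rw [hFeq]
      gcongr
    calc 2 * F r ≤ 2 * (245 * 1.103 * (((703 : ℝ)⁻¹) / (0.473 : ℝ) ^ 2) / 3) := by linarith
      _ ≤ 1.41 := by norm_num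
  · -- large r : use TeoC r
    refine le_trans (min_le_right _ _) ?_
    apply teoC_le (c := 1.0253125) (by norm_num) ?_ (Real.sqrt_pos.2 (by norm_num)) ?_
    · have hx : (0:ℝ) ≤ r / 2 := by linarith
      have hco := cosh_ge hx
      have hxx : (0.225 : ℝ) ≤ r / 2 := by linarith
      nlinarith
    · have hsq : ((Real.sqrt 2)⁻¹) ^ 2 = (2:ℝ)⁻¹ := by
        rw [inv_pow, Real.sq_sqrt (by norm_num : (0:ℝ) ≤ 2)]
      rw [hsq]
      calc (2:ℝ)⁻¹ ≤ 4 * 3.141592 / 3 * (1 - (1 / (1.0253125 : ℝ)) ^ 6) := by norm_num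
        _ ≤ 4 * π / 3 * (1 - (1 / (1.0253125 : ℝ)) ^ 6) := by
            apply mul_le_mul_of_nonneg_right ?_ (by norm_num)
            linarith
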